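/- arXiv:2207.12076 — 3 statements merged into one kernel-verified Lean document; each statement's English description precedes it below -/
import Mathlib

section
/- Let E ⊆ ℝⁿ be an open set, let b be a constant real n×n matrix with bᵀ = −b, let u : E → ℝ be continuously differentiable on E, and let φ : ℝⁿ → ℝ be smooth with compact support contained in E. Then ∫_E (b ∇u(Y)) · ∇φ(Y) dY = 0. -/
open MeasureTheory Metric Set Filter Topology
open scoped ENNReal

noncomputable section

/-- The gradient of `u : ℝⁿ → ℝ`, as the vector of partial derivatives. -/
def grad {n : ℕ} (u : EuclideanSpace ℝ (Fin n) → ℝ) (x : EuclideanSpace ℝ (Fin n)) :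
    Fin n → ℝ :=
  fun i => fderiv ℝ u x (EuclideanSpace.single i 1)

/-- Euclidean dot product on `ℝⁿ`. -/
def dotp {n : ℕ} (v w : Fin n → ℝ) : ℝ := ∑ i, v i * w i

/-- Matrix–vector product. -/
def matVec {n : ℕ} (A : Fin n → Fin n → ℝ) (v : Fin n → ℝ) : Fin n → ℝ :=
  fun i => ∑ j, A i j * v j

theorem euclid_abs_coord_le_norm {m : ℕ} (y : EuclideanSpace ℝ (Fin m)) (i : Fin m) :
    |y i| ≤ ‖y‖ := by
  rw [EuclideanSpace.norm_eq, ← Real.sqrt_sq_eq_abs]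
  apply Real.sqrt_le_sqrt
  simpa using Finset.single_le_sum (f := fun j => ‖y j‖ ^ 2) (fun j _ => sq_nonneg _)
    (Finset.mem_univ i)

/-- Divergence theorem for compactly supported C¹ vector fields on Euclidean space. -/
theorem integral_div_eq_zero {m : ℕ}
    (f : Fin (m+1) → EuclideanSpace ℝ (Fin (m+1)) → ℝ)
    (f' : Fin (m+1) → EuclideanSpace ℝ (Fin (m+1)) → EuclideanSpace ℝ (Fin (m+1)) →L[ℝ] ℝ)
    (hd : ∀ x i, HasFDerivAt (f i) (f' i x) x)
    (hc : ∀ i, Continuous (f i))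
    (R : ℝ) (hR : 0 < R)
    (hsupp : ∀ x : EuclideanSpace ℝ (Fin (m+1)), R ≤ ‖x‖ → ∀ i, f i x = 0 ∧ f' i x = 0)
    (hint : Integrable (fun x => ∑ i, f' i x (EuclideanSpace.single i 1))) :
    ∫ x, ∑ i, f' i x (EuclideanSpace.single i 1) = 0 := by
  letI : PartialOrder (EuclideanSpace ℝ (Fin (m+1))) :=
    PartialOrder.lift (WithLp.ofLp) (WithLp.ofLp_injective 2)
  set eL : EuclideanSpace ℝ (Fin (m+1)) ≃L[ℝ] (Fin (m+1) → ℝ) :=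
    EuclideanSpace.equiv (Fin (m+1)) ℝ with heL
  set a : EuclideanSpace ℝ (Fin (m+1)) := WithLp.toLp 2 (fun _ => -R) with ha
  set b : EuclideanSpace ℝ (Fin (m+1)) := WithLp.toLp 2 (fun _ => R) with hb
  have hab : a ≤ b := fun i => by
    simp only [ha, hb]; linarith
  have key := integral_divergence_of_hasFDerivAt_off_countable_of_equiv
    (F := EuclideanSpace ℝ (Fin (m+1))) eL (fun x y => Iff.rfl)
    (EuclideanSpace.volume_preserving_symm_measurableEquiv_toLp (Fin (m+1)))
    f f' ∅ countable_empty a b hab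
    (fun i => (hc i).continuousOn)
    (fun x _ i => hd x i)
    (fun x => ∑ i, f' i x (EuclideanSpace.single i 1))
    (fun x => rfl)
    hint.integrableOn
  have hIcc : (∫ x in Icc a b, ∑ i, f' i x (EuclideanSpace.single i 1))
      = ∫ x, ∑ i, f' i x (EuclideanSpace.single i 1) := by
    apply setIntegral_eq_integral_of_forall_compl_eq_zero
    intro x hx
    have : ∃ i, ¬ (a i ≤ x i ∧ x i ≤ b i) := by
      by_contra h
      push_neg at h
      exact hx ⟨fun i => (h i).1, fun i => (h i).2⟩
    obtain ⟨i, hi⟩ := this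
    have hRx : R ≤ ‖x‖ := by
      have h1 : R < |x i| := by
        simp only [ha, hb] at hi
        rcases not_and_or.mp hi with h | h <;> push_neg at h <;>
          [skip; skip] <;> cases abs_cases (x i) <;> linarith [abs_nonneg (x i), neg_abs_le (x i), le_abs_self (x i)]
      exact le_trans h1.le (euclid_abs_coord_le_norm x i)
    refine Finset.sum_eq_zero fun i _ => ?_
    rw [(hsupp x hRx i).2]
    rfl
  rw [← hIcc, key]
  refine Finset.sum_eq_zero fun i _ => ?_
  have hface : ∀ (c : ℝ), |c| = R →
      ∀ x : Fin m → ℝ, f i (eL.symm (i.insertNth c x)) = 0 := by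
    intro c hcR x
    apply (hsupp _ _ i).1
    have : |(eL.symm (i.insertNth c x)) i| = R := by
      have : (eL.symm (i.insertNth c x)) i = c := by
        show (i.insertNth c x : Fin (m+1) → ℝ) i = c
        simp
      rw [this, hcR]
    calc R = |(eL.symm (i.insertNth c x)) i| := this.symm
    _ ≤ _ := euclid_abs_coord_le_norm _ i
  have h1 : (∫ x in Icc (eL a ∘ i.succAbove) (eL b ∘ i.succAbove),
      f i (eL.symm (i.insertNth (eL b i) x))) = 0 := by
    rw [setIntegral_eq_zero_of_forall_eq_zero]
    intro x _
    exact hface (eL b i) (show |(R:ℝ)| = R from abs_of_pos hR) x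
  have h2 : (∫ x in Icc (eL a ∘ i.succAbove) (eL b ∘ i.succAbove),
      f i (eL.symm (i.insertNth (eL a i) x))) = 0 := by
    rw [setIntegral_eq_zero_of_forall_eq_zero]
    intro x _
    exact hface (eL a i) (show |(-R:ℝ)| = R by rw [abs_neg]; exact abs_of_pos hR) x
  rw [h1, h2, sub_self]

theorem antisymm_contraction {k : ℕ} (b S : Fin k → Fin k → ℝ)
    (hb : ∀ i j, b j i = - b i j) (hS : ∀ i j, S i j = S j i) :
    ∑ i, ∑ j, b i j * S i j = 0 := by
  have h : (∑ i, ∑ j, b i j * S i j) = - ∑ i, ∑ j, b i j * S i j := by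
    calc ∑ i, ∑ j, b i j * S i j = ∑ j, ∑ i, b i j * S i j := Finset.sum_comm
    _ = ∑ i, ∑ j, b j i * S j i := rfl
    _ = ∑ i, ∑ j, -(b i j * S i j) := by
        refine Finset.sum_congr rfl fun i _ => Finset.sum_congr rfl fun j _ => ?_
        rw [hb i j, hS i j]; ring
    _ = - ∑ i, ∑ j, b i j * S i j := by simp
  linarith

/-- for a constant antisymmetric matrix `b`, a `C¹` function `u` on an open
set `E` and a smooth `φ` compactly supported in `E`, one has `∫_E (b∇u)·∇φ = 0`. -/
theorem statement0
    (n : ℕ) (hn : 1 ≤ n)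
    (E : Set (EuclideanSpace ℝ (Fin n))) (hE : IsOpen E)
    (b : Fin n → Fin n → ℝ) (hb : ∀ i j, b j i = - b i j)
    (u : EuclideanSpace ℝ (Fin n) → ℝ) (hu : ContDiffOn ℝ 1 u E)
    (φ : EuclideanSpace ℝ (Fin n) → ℝ) (hφ : ContDiff ℝ (⊤ : ℕ∞) φ)
    (hφc : HasCompactSupport φ) (hφs : tsupport φ ⊆ E) :
    ∫ Y in E, dotp (matVec b (grad u Y)) (grad φ Y) = 0 := by
  obtain ⟨m, rfl⟩ : ∃ m, n = m + 1 := ⟨n - 1, (Nat.succ_pred_eq_of_pos hn).symm⟩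
  set e : Fin (m+1) → EuclideanSpace ℝ (Fin (m+1)) :=
    fun i => EuclideanSpace.single i 1 with he
  set g : Fin (m+1) → EuclideanSpace ℝ (Fin (m+1)) → ℝ :=
    fun i x => ∑ j, b i j * fderiv ℝ φ x (e j) with hgdef
  have hg : ∀ i, ContDiff ℝ (⊤:ℕ∞) (g i) := by
    intro i
    apply ContDiff.sum
    intro j _
    exact contDiff_const.mul ((hφ.fderiv_right (by simp)).clm_apply contDiff_const)
  have hgzero : ∀ x, x ∉ tsupport φ → ∀ i, g i x = 0 := by
    intro x hx i
    have h0 : fderiv ℝ φ x = 0 := fderiv_of_notMem_tsupport (𝕜 := ℝ) hx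
    simp [hgdef, h0]
  have hgev : ∀ x, x ∉ tsupport φ → ∀ᶠ y in 𝓝 x, ∀ i, g i y = 0 := by
    intro x hx
    filter_upwards [(isClosed_tsupport φ).isOpen_compl.mem_nhds hx] with y hy
    exact hgzero y hy
  set f : Fin (m+1) → EuclideanSpace ℝ (Fin (m+1)) → ℝ := fun i x => u x * g i x with hfdef
  set f' : Fin (m+1) → EuclideanSpace ℝ (Fin (m+1)) →
      EuclideanSpace ℝ (Fin (m+1)) →L[ℝ] ℝ :=
    fun i x => u x • fderiv ℝ (g i) x + g i x • fderiv ℝ u x with hf'def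
  have hucont : ∀ x ∈ E, ContDiffAt ℝ 1 u x := fun x hx => hu.contDiffAt (hE.mem_nhds hx)
  have hf'0 : ∀ x, x ∉ tsupport φ → ∀ i, f' i x = 0 := by
    intro x hx i
    have hgi0 : g i x = 0 := hgzero x hx i
    have hdg : fderiv ℝ (g i) x = 0 := by
      have hev : g i =ᶠ[𝓝 x] fun _ => (0:ℝ) := by
        filter_upwards [hgev x hx] with y hy; exact hy i
      rw [hev.fderiv_eq, fderiv_fun_const]
      rfl
    simp [hf'def, hgi0, hdg]
  have hfev0 : ∀ x, x ∉ tsupport φ → ∀ i, f i =ᶠ[𝓝 x] fun _ => (0:ℝ) := by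
    intro x hx i
    filter_upwards [hgev x hx] with y hy
    simp [hfdef, hy i]
  have hd : ∀ x i, HasFDerivAt (f i) (f' i x) x := by
    intro x i
    by_cases hx : x ∈ E
    · have h1 : HasFDerivAt u (fderiv ℝ u x) x :=
        (((hucont x hx).differentiableAt one_ne_zero)).hasFDerivAt
      have h2 : HasFDerivAt (g i) (fderiv ℝ (g i) x) x :=
        (((hg i).differentiable (by simp)) x).hasFDerivAt
      exact h1.mul h2
    · have hx' : x ∉ tsupport φ := fun h => hx (hφs h)
      rw [hf'0 x hx' i]
      exact (hasFDerivAt_const 0 x).congr_of_eventuallyEq (hfev0 x hx' i)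
  have hcf : ∀ i, Continuous (f i) := by
    intro i
    rw [continuous_iff_continuousAt]
    intro x
    by_cases hx : x ∈ E
    · exact ((hucont x hx).continuousAt).mul ((hg i).continuous.continuousAt)
    · have hx' : x ∉ tsupport φ := fun h => hx (hφs h)
      exact (hfev0 x hx' i).continuousAt
  set D : EuclideanSpace ℝ (Fin (m+1)) → ℝ := fun x => ∑ i, f' i x (e i) with hDdef
  have hDE : ∀ x ∈ E, D x = ∑ i, (u x * fderiv ℝ (g i) x (e i) + g i x * fderiv ℝ u x (e i)) := by
    intro x _
    simp [hDdef, hf'def]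
  have hDcont : Continuous D := by
    rw [continuous_iff_continuousAt]
    intro x
    by_cases hx : x ∈ E
    · have hdu : ContinuousOn (fderiv ℝ u) E := hu.continuousOn_fderiv_of_isOpen hE le_rfl
      have hduA : ContinuousAt (fderiv ℝ u) x := hdu.continuousAt (hE.mem_nhds hx)
      have hterm : ∀ i, ContinuousAt (fun y => f' i y (e i)) x := by
        intro i
        have h1 : ContinuousAt (fun y => u y * fderiv ℝ (g i) y (e i)) x :=
          ((hucont x hx).continuousAt).mul
            ((((hg i).fderiv_right (m := (⊤:ℕ∞)) (by simp)).clm_apply contDiff_const).continuous.continuousAt)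
        have h2 : ContinuousAt (fun y => g i y * fderiv ℝ u y (e i)) x := by
          refine ((hg i).continuous.continuousAt).mul ?_
          exact ((ContinuousLinearMap.apply ℝ ℝ (e i)).continuous.continuousAt).comp hduA
        have h3 := h1.add h2
        refine h3.congr ?_
        filter_upwards [hE.mem_nhds hx] with y hy
        simp [hf'def]
      exact tendsto_finset_sum _ (fun i _ => hterm i)
    · have hx' : x ∉ tsupport φ := fun h => hx (hφs h)
      have hev : D =ᶠ[𝓝 x] fun _ => (0:ℝ) := by
        filter_upwards [(isClosed_tsupport φ).isOpen_compl.mem_nhds hx'] with y hy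
        simp only [hDdef]
        refine Finset.sum_eq_zero fun i _ => ?_
        rw [hf'0 y hy i]; rfl
      exact hev.continuousAt
  have hDsupp : HasCompactSupport D := by
    apply HasCompactSupport.intro hφc
    intro x hx
    refine Finset.sum_eq_zero fun i _ => ?_
    rw [hf'0 x hx i]; rfl
  have hint : Integrable D := hDcont.integrable_of_hasCompactSupport hDsupp
  obtain ⟨R0, hR0⟩ := hφc.isBounded.subset_closedBall 0
  set R : ℝ := max R0 0 + 1 with hRdef
  have hR : 0 < R := by positivity
  have hout : ∀ x : EuclideanSpace ℝ (Fin (m+1)), R ≤ ‖x‖ → x ∉ tsupport φ := by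
    intro x hRx hmem
    have := hR0 hmem
    rw [mem_closedBall_zero_iff] at this
    have : ‖x‖ ≤ max R0 0 := le_trans this (le_max_left _ _)
    linarith
  have hdiv : ∫ x, D x = 0 := by
    apply integral_div_eq_zero f f' hd hcf R hR
    · intro x hRx i
      have hx := hout x hRx
      constructor
      · simp [hfdef, hgzero x hx i]
      · exact hf'0 x hx i
    · exact hint
  -- the pointwise identity
  have hTD : ∀ x, dotp (matVec b (grad u x)) (grad φ x) = - D x := by
    intro x
    by_cases hx : x ∈ E
    · -- x ∈ E : compute
      have hΦc : ContDiff ℝ (⊤:ℕ∞) (fderiv ℝ φ) := hφ.fderiv_right (by simp)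
      have hΦd : DifferentiableAt ℝ (fderiv ℝ φ) x := (hΦc.differentiable (by simp)) x
      have hsymm : IsSymmSndFDerivAt ℝ φ x := by
        have h2 : ContDiff ℝ ((2:ℕ∞) : WithTop ℕ∞) φ := hφ.of_le (by exact_mod_cast le_top)
        exact h2.contDiffAt.isSymmSndFDerivAt (by simp)
      -- derivative of g i
      have hgder : ∀ i, HasFDerivAt (g i)
          (∑ j, b i j • ((fderiv ℝ φ x).comp (0 : EuclideanSpace ℝ (Fin (m+1)) →L[ℝ]
              EuclideanSpace ℝ (Fin (m+1))) + (fderiv ℝ (fderiv ℝ φ) x).flip (e j))) x := by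
        intro i
        apply HasFDerivAt.fun_sum
        intro j _
        exact (hΦd.hasFDerivAt.clm_apply (hasFDerivAt_const (e j) x)).const_mul (b i j)
      have hgval : ∀ i, fderiv ℝ (g i) x (e i)
          = ∑ j, b i j * fderiv ℝ (fderiv ℝ φ) x (e i) (e j) := by
        intro i
        rw [(hgder i).fderiv]
        simp [ContinuousLinearMap.sum_apply]
      have hsum0 : ∑ i, u x * fderiv ℝ (g i) x (e i) = 0 := by
        have : ∑ i, ∑ j, b i j * fderiv ℝ (fderiv ℝ φ) x (e i) (e j) = 0 :=
          antisymm_contraction b (fun i j => fderiv ℝ (fderiv ℝ φ) x (e i) (e j)) hb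
            (fun i j => hsymm (e i) (e j))
        calc ∑ i, u x * fderiv ℝ (g i) x (e i)
            = u x * ∑ i, fderiv ℝ (g i) x (e i) := by rw [Finset.mul_sum]
        _ = u x * ∑ i, ∑ j, b i j * fderiv ℝ (fderiv ℝ φ) x (e i) (e j) := by
              rw [Finset.sum_congr rfl fun i _ => hgval i]
        _ = 0 := by rw [this, mul_zero]
      have hD : D x = ∑ i, g i x * fderiv ℝ u x (e i) := by
        rw [hDE x hx, Finset.sum_add_distrib, hsum0, zero_add]
      rw [hD]
      -- now pure algebra
      have : dotp (matVec b (grad u x)) (grad φ x)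
          = ∑ i, ∑ j, b i j * (fderiv ℝ u x (e j) * fderiv ℝ φ x (e i)) := by
        simp only [dotp, matVec, grad, Finset.sum_mul]
        refine Finset.sum_congr rfl fun i _ => Finset.sum_congr rfl fun j _ => ?_
        ring
      rw [this]
      have hgx : ∑ i, g i x * fderiv ℝ u x (e i)
          = ∑ i, ∑ j, b i j * (fderiv ℝ φ x (e j) * fderiv ℝ u x (e i)) := by
        refine Finset.sum_congr rfl fun i _ => ?_
        simp only [hgdef, Finset.sum_mul]
        refine Finset.sum_congr rfl fun j _ => ?_
        ring
      rw [hgx]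
      rw [← neg_eq_iff_eq_neg] at *
      rw [← Finset.sum_neg_distrib]
      calc ∑ i, -∑ j, b i j * (fderiv ℝ u x (e j) * fderiv ℝ φ x (e i))
          = ∑ i, ∑ j, -(b i j * (fderiv ℝ u x (e j) * fderiv ℝ φ x (e i))) := by
            refine Finset.sum_congr rfl fun i _ => ?_
            rw [Finset.sum_neg_distrib]
      _ = ∑ j, ∑ i, -(b i j * (fderiv ℝ u x (e j) * fderiv ℝ φ x (e i))) := Finset.sum_comm
      _ = ∑ i, ∑ j, -(b j i * (fderiv ℝ u x (e i) * fderiv ℝ φ x (e j))) := rfl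
      _ = ∑ i, ∑ j, b i j * (fderiv ℝ φ x (e j) * fderiv ℝ u x (e i)) := by
            refine Finset.sum_congr rfl fun i _ => Finset.sum_congr rfl fun j _ => ?_
            rw [hb i j]; ring
    · -- x ∉ E
      have hx' : x ∉ tsupport φ := fun h => hx (hφs h)
      have h1 : grad φ x = 0 := by
        funext i
        simp [grad, fderiv_of_notMem_tsupport (𝕜 := ℝ) hx']
      have h2 : D x = 0 := by
        refine Finset.sum_eq_zero fun i _ => ?_
        rw [hf'0 x hx' i]; rfl
      rw [h1, h2, neg_zero]
      simp [dotp]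
  calc ∫ Y in E, dotp (matVec b (grad u Y)) (grad φ Y)
      = ∫ Y, dotp (matVec b (grad u Y)) (grad φ Y) := by
        apply setIntegral_eq_integral_of_forall_compl_eq_zero
        intro x hx
        have hx' : x ∉ tsupport φ := fun h => hx (hφs h)
        have h1 : grad φ x = 0 := by
          funext i
          simp [grad, fderiv_of_notMem_tsupport (𝕜 := ℝ) hx']
        rw [h1]
        simp [dotp]
  _ = ∫ Y, - D Y := by
        congr 1
        funext Y
        exact hTD Y
  _ = - ∫ Y, D Y := integral_neg _
  _ = 0 := by rw [hdiv, neg_zero]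
end
end

section
/- Let B ⊆ ℝⁿ be an open ball, λ₀ > 0 and r > 2. Let Â, A₁ : B → ℝ^{n×n} be measurable with λ₀‖ξ‖² ≤ ξ · (Â(Y)ξ) for almost every Y ∈ B and all ξ ∈ ℝⁿ, and with Â − A₁ ∈ L^r(B). Let u, û : B → ℝ be C¹ functions with ∇u ∈ L^{2r/(r−2)}(B), such that w := û − u is C¹ with compact support contained in B, such that ∫_B (A₁∇u)·∇ϕ = 0 and ∫_B (Â∇û)·∇ϕ = 0 for every C¹ function ϕ with compact support in B, and such that (Â∇û)·∇w, (Â∇u)·∇w and (A₁∇u)·∇w are integrable on B. Then ( ∫_B ‖∇(û − u)‖² )^{1/2} ≤ λ₀^{-1} ‖Â − A₁‖_{L^r(B)} ‖∇u‖_{L^{2r/(r−2)}(B)}. -/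
open MeasureTheory Metric Set
open scoped ENNReal

noncomputable section

/-- Euclidean norm of a vector in `ℝⁿ`. -/
def vnorm {n : ℕ} (v : Fin n → ℝ) : ℝ := Real.sqrt (∑ i, v i ^ 2)

/-- A fixed norm on `n × n` real matrices (the Frobenius norm). -/
def mnorm {n : ℕ} (M : Fin n → Fin n → ℝ) : ℝ := Real.sqrt (∑ i, ∑ j, (M i j) ^ 2)

lemma vnorm_nonneg' {n : ℕ} (v : Fin n → ℝ) : 0 ≤ vnorm v := Real.sqrt_nonneg _
lemma mnorm_nonneg' {n : ℕ} (M : Fin n → Fin n → ℝ) : 0 ≤ mnorm M := Real.sqrt_nonneg _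
lemma vnorm_sq' {n : ℕ} (v : Fin n → ℝ) : vnorm v ^ 2 = ∑ i, v i ^ 2 :=
  Real.sq_sqrt (Finset.sum_nonneg fun i _ => sq_nonneg _)

lemma dotp_comm' {n : ℕ} (v w : Fin n → ℝ) : dotp v w = dotp w v := by
  unfold dotp; exact Finset.sum_congr rfl fun i _ => mul_comm _ _

lemma abs_dotp_le' {n : ℕ} (v w : Fin n → ℝ) : |dotp v w| ≤ vnorm v * vnorm w := by
  have h := Finset.sum_mul_sq_le_sq_mul_sq Finset.univ v w
  have h2 : |dotp v w| = Real.sqrt ((dotp v w) ^ 2) := (Real.sqrt_sq_eq_abs _).symm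
  rw [h2, vnorm, vnorm, ← Real.sqrt_mul (Finset.sum_nonneg fun i _ => sq_nonneg _)]
  exact Real.sqrt_le_sqrt h

lemma vnorm_matVec_le' {n : ℕ} (M : Fin n → Fin n → ℝ) (v : Fin n → ℝ) :
    vnorm (matVec M v) ≤ mnorm M * vnorm v := by
  have h : ∀ i, (matVec M v i) ^ 2 ≤ (∑ j, M i j ^ 2) * ∑ j, v j ^ 2 := fun i =>
    Finset.sum_mul_sq_le_sq_mul_sq Finset.univ (M i) v
  have h2 : ∑ i, (matVec M v i) ^ 2 ≤ (∑ i, ∑ j, M i j ^ 2) * ∑ j, v j ^ 2 := by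
    rw [Finset.sum_mul]; exact Finset.sum_le_sum fun i _ => h i
  rw [vnorm, vnorm, mnorm, ← Real.sqrt_mul (Finset.sum_nonneg fun i _ =>
    Finset.sum_nonneg fun j _ => sq_nonneg _)]
  exact Real.sqrt_le_sqrt h2

lemma abs_dotp_matVec_le' {n : ℕ} (M : Fin n → Fin n → ℝ) (v g : Fin n → ℝ) :
    |dotp (matVec M v) g| ≤ mnorm M * vnorm v * vnorm g :=
  (abs_dotp_le' _ _).trans (mul_le_mul_of_nonneg_right (vnorm_matVec_le' M v) (vnorm_nonneg' g))

lemma mnorm_swap' {n : ℕ} (M N : Fin n → Fin n → ℝ) : mnorm (M - N) = mnorm (N - M) := by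
  unfold mnorm
  congr 1
  exact Finset.sum_congr rfl fun i _ => Finset.sum_congr rfl fun j _ => by
    simp only [Pi.sub_apply]; ring

lemma dotp_sub_left' {n : ℕ} (a b g : Fin n → ℝ) : dotp a g - dotp b g = dotp (a - b) g := by
  unfold dotp
  rw [← Finset.sum_sub_distrib]
  exact Finset.sum_congr rfl fun i _ => by simp [sub_mul]

lemma matVec_sub_left' {n : ℕ} (M N : Fin n → Fin n → ℝ) (v : Fin n → ℝ) :
    matVec M v - matVec N v = matVec (M - N) v := by
  funext i
  simp only [Pi.sub_apply, matVec, ← Finset.sum_sub_distrib]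
  exact Finset.sum_congr rfl fun j _ => by simp [sub_mul]

lemma matVec_map_sub' {n : ℕ} (M : Fin n → Fin n → ℝ) (v w : Fin n → ℝ) :
    matVec M (v - w) = matVec M v - matVec M w := by
  funext i
  simp only [Pi.sub_apply, matVec, ← Finset.sum_sub_distrib]
  exact Finset.sum_congr rfl fun j _ => by simp [mul_sub]

lemma continuous_mnorm' {n : ℕ} : Continuous (mnorm : (Fin n → Fin n → ℝ) → ℝ) := by
  unfold mnorm
  exact Real.continuous_sqrt.comp (continuous_finset_sum _ fun i _ =>
    continuous_finset_sum _ fun j _ => ((continuous_apply j).comp (continuous_apply i)).pow 2)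

lemma continuous_vnorm' {n : ℕ} : Continuous (vnorm : (Fin n → ℝ) → ℝ) := by
  unfold vnorm
  exact Real.continuous_sqrt.comp (continuous_finset_sum _ fun i _ => (continuous_apply i).pow 2)


/-- energy estimate for the difference of the solutions `uh` and `u` of the
two operators `Ah` and `A₁` on a ball `B`:
`‖∇(uh − u)‖_{L²(B)} ≤ λ₀⁻¹ ‖Ah − A₁‖_{L^r(B)} ‖∇u‖_{L^{2r/(r−2)}(B)}`. -/
theorem statement8
    (n : ℕ) (hn : 1 ≤ n) (x₀ : EuclideanSpace ℝ (Fin n)) (R : ℝ) (hR : 0 < R)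
    (lam : ℝ) (hlam : 0 < lam) (r : ℝ) (hr : 2 < r)
    (Ah A₁ : EuclideanSpace ℝ (Fin n) → Fin n → Fin n → ℝ)
    (hAhm : AEStronglyMeasurable Ah (volume.restrict (ball x₀ R)))
    (hA₁m : AEStronglyMeasurable A₁ (volume.restrict (ball x₀ R)))
    (hell : ∀ᵐ Y ∂(volume.restrict (ball x₀ R)), ∀ ξ : Fin n → ℝ,
      lam * ∑ i, ξ i ^ 2 ≤ dotp ξ (matVec (Ah Y) ξ))
    (hLr : IntegrableOn (fun Y => mnorm (Ah Y - A₁ Y) ^ r) (ball x₀ R) volume)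
    (u uh : EuclideanSpace ℝ (Fin n) → ℝ)
    (hu : ContDiffOn ℝ 1 u (ball x₀ R)) (huh : ContDiffOn ℝ 1 uh (ball x₀ R))
    (hgradu : IntegrableOn (fun Y => vnorm (grad u Y) ^ (2 * r / (r - 2)))
      (ball x₀ R) volume)
    (hw : ContDiff ℝ 1 (fun Y => uh Y - u Y))
    (hwc : HasCompactSupport (fun Y => uh Y - u Y))
    (hws : tsupport (fun Y => uh Y - u Y) ⊆ ball x₀ R)
    (hsol₁ : ∀ ϕ : EuclideanSpace ℝ (Fin n) → ℝ, ContDiff ℝ 1 ϕ → HasCompactSupport ϕ →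
      tsupport ϕ ⊆ ball x₀ R →
      ∫ Y in ball x₀ R, dotp (matVec (A₁ Y) (grad u Y)) (grad ϕ Y) = 0)
    (hsolhat : ∀ ϕ : EuclideanSpace ℝ (Fin n) → ℝ, ContDiff ℝ 1 ϕ → HasCompactSupport ϕ →
      tsupport ϕ ⊆ ball x₀ R →
      ∫ Y in ball x₀ R, dotp (matVec (Ah Y) (grad uh Y)) (grad ϕ Y) = 0)
    (hint1 : IntegrableOn
      (fun Y => dotp (matVec (Ah Y) (grad uh Y)) (grad (fun z => uh z - u z) Y))
      (ball x₀ R) volume)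
    (hint2 : IntegrableOn
      (fun Y => dotp (matVec (Ah Y) (grad u Y)) (grad (fun z => uh z - u z) Y))
      (ball x₀ R) volume)
    (hint3 : IntegrableOn
      (fun Y => dotp (matVec (A₁ Y) (grad u Y)) (grad (fun z => uh z - u z) Y))
      (ball x₀ R) volume) :
    (∫ Y in ball x₀ R, vnorm (grad (fun z => uh z - u z) Y) ^ 2) ^ (1 / 2 : ℝ) ≤
      lam⁻¹ * (∫ Y in ball x₀ R, mnorm (Ah Y - A₁ Y) ^ r) ^ (1 / r) *
        (∫ Y in ball x₀ R, vnorm (grad u Y) ^ (2 * r / (r - 2))) ^ ((r - 2) / (2 * r)) := by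
  have hr0 : (0:ℝ) < r := by linarith
  have hr2 : (0:ℝ) < r - 2 := by linarith
  set B := ball x₀ R with hB
  set μ := volume.restrict B with hμ
  set q : ℝ := 2 * r / (r - 2) with hq
  have hq0 : 0 < q := by positivity
  have hBopen : IsOpen B := isOpen_ball
  have hBmeas : MeasurableSet B := measurableSet_ball
  set w : EuclideanSpace ℝ (Fin n) → ℝ := fun z => uh z - u z with hwdef
  -- continuity / support of grad w
  have hgwc : Continuous (fun Y => grad w Y) := by
    have h1 : Continuous (fderiv ℝ w) := hw.continuous_fderiv one_ne_zero
    exact continuous_pi fun i =>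
      (ContinuousLinearMap.apply ℝ ℝ (EuclideanSpace.single i (1:ℝ))).continuous.comp h1
  have hgws : HasCompactSupport (fun Y => grad w Y) := by
    have h1 : HasCompactSupport (fderiv ℝ w) := hwc.fderiv ℝ
    have : (fun Y => grad w Y) =
        (fun L : EuclideanSpace ℝ (Fin n) →L[ℝ] ℝ => fun i => L (EuclideanSpace.single i 1)) ∘
        (fderiv ℝ w) := rfl
    rw [this]
    exact h1.comp_left (by funext i; simp)
  have hE3cont : Continuous (fun Y => vnorm (grad w Y) ^ 2) :=
    (continuous_vnorm'.comp hgwc).pow 2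
  have hE3supp : HasCompactSupport (fun Y => vnorm (grad w Y) ^ 2) := by
    have : (fun Y => vnorm (grad w Y) ^ 2) = (fun v : Fin n → ℝ => vnorm v ^ 2) ∘
        (fun Y => grad w Y) := rfl
    rw [this]
    exact hgws.comp_left (by simp [vnorm])
  have hE3int : Integrable (fun Y => vnorm (grad w Y) ^ 2) volume :=
    hE3cont.integrable_of_hasCompactSupport hE3supp
  set E : ℝ := ∫ Y in B, vnorm (grad w Y) ^ 2 with hEdef
  have hE0 : 0 ≤ E := setIntegral_nonneg hBmeas fun Y _ => sq_nonneg _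
  -- grad decomposition on B
  have hgrads : ∀ Y ∈ B, grad w Y = grad uh Y - grad u Y := by
    intro Y hY
    have hu' : DifferentiableAt ℝ u Y :=
      (hu.differentiableOn one_ne_zero).differentiableAt (hBopen.mem_nhds hY)
    have hw' : DifferentiableAt ℝ w Y := (hw.differentiable one_ne_zero).differentiableAt
    have huh' : DifferentiableAt ℝ uh Y := by
      have huu : uh = fun z => w z + u z := by funext z; simp [hwdef]
      rw [huu]; exact hw'.add hu'
    funext i
    have hfd : fderiv ℝ w Y = fderiv ℝ uh Y - fderiv ℝ u Y := fderiv_sub huh' hu'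
    simp only [grad, Pi.sub_apply, hfd, ContinuousLinearMap.sub_apply]
  -- pointwise identity for the elliptic integrand
  have hPeq : ∀ Y ∈ B,
      dotp (matVec (Ah Y) (grad uh Y)) (grad w Y) -
        dotp (matVec (Ah Y) (grad u Y)) (grad w Y) =
      dotp (matVec (Ah Y) (grad w Y)) (grad w Y) := by
    intro Y hY
    rw [dotp_sub_left', ← matVec_map_sub', ← hgrads Y hY]
  have hPint : IntegrableOn (fun Y => dotp (matVec (Ah Y) (grad w Y)) (grad w Y)) B volume :=
    MeasureTheory.IntegrableOn.congr_fun (hint1.sub hint2) hPeq hBmeas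
  -- ellipticity
  have hell2 : ∀ᵐ Y ∂μ, lam * vnorm (grad w Y) ^ 2 ≤
      dotp (matVec (Ah Y) (grad w Y)) (grad w Y) := by
    refine hell.mono fun Y hY => ?_
    rw [vnorm_sq', dotp_comm']
    exact hY _
  have hlamE : lam * E ≤ ∫ Y in B, dotp (matVec (Ah Y) (grad w Y)) (grad w Y) := by
    rw [hEdef, ← integral_const_mul]
    exact integral_mono_ae ((hE3int.integrableOn).const_mul lam) hPint hell2
  -- solution identities
  have h1 : ∫ Y in B, dotp (matVec (Ah Y) (grad uh Y)) (grad w Y) = 0 := hsolhat w hw hwc hws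
  have h3 : ∫ Y in B, dotp (matVec (A₁ Y) (grad u Y)) (grad w Y) = 0 := hsol₁ w hw hwc hws
  set h : EuclideanSpace ℝ (Fin n) → ℝ :=
    fun Y => dotp (matVec (A₁ Y - Ah Y) (grad u Y)) (grad w Y) with hhdef
  have hheq : ∀ Y, dotp (matVec (A₁ Y) (grad u Y)) (grad w Y) -
      dotp (matVec (Ah Y) (grad u Y)) (grad w Y) = h Y := fun Y => by
    rw [dotp_sub_left', matVec_sub_left']
  have hhint : Integrable h μ := by
    exact MeasureTheory.IntegrableOn.congr_fun (hint3.sub hint2) (fun Y _ => hheq Y) hBmeas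
  have hPval : (∫ Y in B, dotp (matVec (Ah Y) (grad w Y)) (grad w Y)) = ∫ Y in B, h Y := by
    rw [← setIntegral_congr_fun hBmeas hPeq, integral_sub hint1 hint2, h1, zero_sub,
      ← setIntegral_congr_fun hBmeas (fun Y _ => hheq Y), integral_sub hint3 hint2, h3, zero_sub]
  have hlamE2 : lam * E ≤ ∫ Y in B, h Y := hPval ▸ hlamE
  -- the three L^p quantities
  set a : ℝ := ∫ Y in B, mnorm (Ah Y - A₁ Y) ^ r with hadef
  set b : ℝ := ∫ Y in B, vnorm (grad u Y) ^ q with hbdef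
  have ha0 : 0 ≤ a := setIntegral_nonneg hBmeas fun Y _ => Real.rpow_nonneg (mnorm_nonneg' _) r
  have hb0 : 0 ≤ b := setIntegral_nonneg hBmeas fun Y _ => Real.rpow_nonneg (vnorm_nonneg' _) q
  set G1 : EuclideanSpace ℝ (Fin n) → ℝ≥0∞ :=
    fun Y => ENNReal.ofReal (mnorm (Ah Y - A₁ Y) ^ r) with hG1def
  set G2 : EuclideanSpace ℝ (Fin n) → ℝ≥0∞ :=
    fun Y => ENNReal.ofReal (vnorm (grad u Y) ^ q) with hG2def
  set G3 : EuclideanSpace ℝ (Fin n) → ℝ≥0∞ :=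
    fun Y => ENNReal.ofReal (vnorm (grad w Y) ^ 2) with hG3def
  have hG1m : AEMeasurable G1 μ :=
    ENNReal.measurable_ofReal.comp_aemeasurable hLr.1.aemeasurable
  have hG2m : AEMeasurable G2 μ :=
    ENNReal.measurable_ofReal.comp_aemeasurable hgradu.1.aemeasurable
  have hG3m : AEMeasurable G3 μ :=
    (ENNReal.continuous_ofReal.comp hE3cont).aemeasurable
  have hJ1 : ∫⁻ Y, G1 Y ∂μ = ENNReal.ofReal a :=
    (MeasureTheory.ofReal_integral_eq_lintegral_ofReal hLr
      (ae_of_all _ fun Y => Real.rpow_nonneg (mnorm_nonneg' _) r)).symm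
  have hJ2 : ∫⁻ Y, G2 Y ∂μ = ENNReal.ofReal b :=
    (MeasureTheory.ofReal_integral_eq_lintegral_ofReal hgradu
      (ae_of_all _ fun Y => Real.rpow_nonneg (vnorm_nonneg' _) q)).symm
  have hJ3 : ∫⁻ Y, G3 Y ∂μ = ENNReal.ofReal E :=
    (MeasureTheory.ofReal_integral_eq_lintegral_ofReal hE3int.integrableOn
      (ae_of_all _ fun Y => sq_nonneg _)).symm
  -- pointwise identification of the Hölder integrand
  have hGprod : ∀ Y, G1 Y ^ (1/r : ℝ) * G2 Y ^ ((r-2)/(2*r)) * G3 Y ^ (1/2 : ℝ) =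
      ENNReal.ofReal (mnorm (Ah Y - A₁ Y) * vnorm (grad u Y) * vnorm (grad w Y)) := by
    intro Y
    have e1 : (mnorm (Ah Y - A₁ Y) ^ r) ^ (1/r : ℝ) = mnorm (Ah Y - A₁ Y) := by
      rw [← Real.rpow_mul (mnorm_nonneg' _), mul_one_div, div_self hr0.ne', Real.rpow_one]
    have e2 : (vnorm (grad u Y) ^ q) ^ ((r-2)/(2*r) : ℝ) = vnorm (grad u Y) := by
      rw [← Real.rpow_mul (vnorm_nonneg' _),
        show q * ((r-2)/(2*r)) = 1 by rw [hq]; field_simp, Real.rpow_one]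
    have e3 : ((vnorm (grad w Y) ^ 2 : ℝ)) ^ ((1:ℝ)/2) = vnorm (grad w Y) := by
      rw [← Real.rpow_natCast (vnorm (grad w Y)) 2, ← Real.rpow_mul (vnorm_nonneg' _)]
      norm_num
    rw [hG1def, hG2def, hG3def]
    rw [ENNReal.ofReal_rpow_of_nonneg (Real.rpow_nonneg (mnorm_nonneg' _) r) (by positivity),
      ENNReal.ofReal_rpow_of_nonneg (Real.rpow_nonneg (vnorm_nonneg' _) q) (by positivity),
      ENNReal.ofReal_rpow_of_nonneg (sq_nonneg _) (by norm_num),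
      e1, e2, e3, ← ENNReal.ofReal_mul (mnorm_nonneg' _),
      ← ENNReal.ofReal_mul (mul_nonneg (mnorm_nonneg' _) (vnorm_nonneg' _))]
  -- three-factor Hölder
  have hHolder : (∫⁻ Y, ENNReal.ofReal
        (mnorm (Ah Y - A₁ Y) * vnorm (grad u Y) * vnorm (grad w Y)) ∂μ) ≤
      ENNReal.ofReal a ^ (1/r : ℝ) * ENNReal.ofReal b ^ ((r-2)/(2*r) : ℝ) *
        ENNReal.ofReal E ^ (1/2 : ℝ) := by
    have hsum : ∑ i : Fin 3, (![1/r, (r-2)/(2*r), (1:ℝ)/2]) i = 1 := by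
      simp only [Fin.sum_univ_three, Matrix.cons_val_zero, Matrix.cons_val_one, Matrix.head_cons,
        Matrix.cons_val_two, Matrix.tail_cons]
      field_simp
      ring
    have key := ENNReal.lintegral_prod_norm_pow_le (μ := μ) (Finset.univ : Finset (Fin 3))
      (f := ![G1, G2, G3]) (p := ![1/r, (r-2)/(2*r), 1/2])
      (fun i _ => by
        fin_cases i
        · exact hG1m
        · exact hG2m
        · exact hG3m)
      hsum
      (fun i _ => by
        fin_cases i
        · simp only [Matrix.cons_val_zero]; exact (one_div_pos.2 hr0).le
        · simp only [Matrix.cons_val_one, Matrix.head_cons]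
          exact div_nonneg hr2.le (by linarith)
        · simp only [Matrix.cons_val_two, Matrix.tail_cons, Matrix.head_cons]; norm_num)
    simp only [Fin.prod_univ_three, Matrix.cons_val_zero, Matrix.cons_val_one, Matrix.head_cons,
      Matrix.cons_val_two, Matrix.tail_cons] at key
    calc (∫⁻ Y, ENNReal.ofReal
          (mnorm (Ah Y - A₁ Y) * vnorm (grad u Y) * vnorm (grad w Y)) ∂μ)
        = ∫⁻ Y, G1 Y ^ (1/r : ℝ) * G2 Y ^ ((r-2)/(2*r) : ℝ) * G3 Y ^ (1/2 : ℝ) ∂μ := by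
          exact lintegral_congr fun Y => (hGprod Y).symm
      _ ≤ (∫⁻ Y, G1 Y ∂μ) ^ (1/r : ℝ) * (∫⁻ Y, G2 Y ∂μ) ^ ((r-2)/(2*r) : ℝ) *
            (∫⁻ Y, G3 Y ∂μ) ^ (1/2 : ℝ) := key
      _ = ENNReal.ofReal a ^ (1/r : ℝ) * ENNReal.ofReal b ^ ((r-2)/(2*r) : ℝ) *
            ENNReal.ofReal E ^ (1/2 : ℝ) := by rw [hJ1, hJ2, hJ3]
  -- pass to real integrals
  set C : ℝ := a ^ (1/r : ℝ) * b ^ ((r-2)/(2*r) : ℝ) with hCdef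
  have hC0 : 0 ≤ C := mul_nonneg (Real.rpow_nonneg ha0 _) (Real.rpow_nonneg hb0 _)
  have hRHS : ENNReal.ofReal a ^ (1/r : ℝ) * ENNReal.ofReal b ^ ((r-2)/(2*r) : ℝ) *
      ENNReal.ofReal E ^ (1/2 : ℝ) = ENNReal.ofReal (C * E ^ (1/2 : ℝ)) := by
    rw [ENNReal.ofReal_rpow_of_nonneg ha0 (by positivity),
      ENNReal.ofReal_rpow_of_nonneg hb0 (by positivity),
      ENNReal.ofReal_rpow_of_nonneg hE0 (by norm_num),
      ← ENNReal.ofReal_mul (Real.rpow_nonneg ha0 _),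
      ← ENNReal.ofReal_mul (mul_nonneg (Real.rpow_nonneg ha0 _) (Real.rpow_nonneg hb0 _))]
  have hbound : ∀ Y, |h Y| ≤ mnorm (Ah Y - A₁ Y) * vnorm (grad u Y) * vnorm (grad w Y) := by
    intro Y
    have := abs_dotp_matVec_le' (A₁ Y - Ah Y) (grad u Y) (grad w Y)
    rwa [mnorm_swap'] at this
  have habs : (∫ Y in B, |h Y|) ≤ C * E ^ (1/2 : ℝ) := by
    have s2 : ENNReal.ofReal (∫ Y in B, |h Y|) = ∫⁻ Y, ENNReal.ofReal |h Y| ∂μ :=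
      MeasureTheory.ofReal_integral_eq_lintegral_ofReal hhint.abs
        (ae_of_all _ fun Y => abs_nonneg _)
    have s3 : (∫⁻ Y, ENNReal.ofReal |h Y| ∂μ) ≤ ∫⁻ Y, ENNReal.ofReal
        (mnorm (Ah Y - A₁ Y) * vnorm (grad u Y) * vnorm (grad w Y)) ∂μ :=
      lintegral_mono fun Y => ENNReal.ofReal_le_ofReal (hbound Y)
    have s4 : ENNReal.ofReal (∫ Y in B, |h Y|) ≤ ENNReal.ofReal (C * E ^ (1/2 : ℝ)) := by
      rw [s2]
      exact s3.trans (hHolder.trans_eq hRHS)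
    exact (ENNReal.ofReal_le_ofReal_iff (by positivity)).1 s4
  have hfinal : lam * E ≤ C * E ^ (1/2 : ℝ) := by
    refine hlamE2.trans (le_trans ?_ habs)
    exact integral_mono hhint hhint.abs fun Y => le_abs_self _
  -- conclude
  have goal2 : E ^ (1/2 : ℝ) ≤ lam⁻¹ * C := by
    rcases hE0.eq_or_lt with hE|hE
    · rw [← hE, Real.zero_rpow (by norm_num : (1/2 : ℝ) ≠ 0)]
      positivity
    · have hs : 0 < E ^ (1/2 : ℝ) := Real.rpow_pos_of_pos hE _
      have hss : E ^ (1/2 : ℝ) * E ^ (1/2 : ℝ) = E := by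
        rw [← Real.rpow_add hE]; norm_num
      have h5 : lam * E ^ (1/2 : ℝ) * E ^ (1/2 : ℝ) ≤ C * E ^ (1/2 : ℝ) := by
        rw [mul_assoc, hss]; exact hfinal
      have h6 : lam * E ^ (1/2 : ℝ) ≤ C := le_of_mul_le_mul_right h5 hs
      calc E ^ (1/2 : ℝ) = lam⁻¹ * (lam * E ^ (1/2 : ℝ)) := by
            field_simp
        _ ≤ lam⁻¹ * C := mul_le_mul_of_nonneg_left h6 (inv_nonneg.2 hlam.le)
  calc E ^ (1/2 : ℝ) ≤ lam⁻¹ * C := goal2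
    _ = lam⁻¹ * a ^ (1/r : ℝ) * b ^ ((r-2)/(2*r) : ℝ) := by rw [hCdef]; ring
end
end

section
/- Let (X, 𝔐, μ) be a measure space, let S, h : X → [0,∞] be measurable, and let q ∈ (0,∞), η > 0, C > 0. Assume ∫ S^q dμ < ∞ and that the good-λ inequality μ({S > 2λ} ∩ {h ≤ γ²λ²}) ≤ C γ^η μ({S > λ}) holds for every γ ∈ (0,1) and every λ > 0. Then there exists a constant C', depending only on q, η and C, such that ∫ S^q dμ ≤ C' ∫ h^{q/2} dμ. -/
open MeasureTheory
open scoped ENNReal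

/-- the distribution-function (layer-cake) argument: a good-λ inequality
between `S` and `h`, together with `∫ S^q dμ < ∞`, yields
`∫ S^q dμ ≤ C' ∫ h^{q/2} dμ` with `C'` depending only on `q`, `η` and `C`. -/
theorem statement10
    (q η C : ℝ) (hq : 0 < q) (hη : 0 < η) (hC : 0 < C) :
    ∃ C' : ℝ, 0 < C' ∧
      ∀ (X : Type) [MeasurableSpace X] (μ : Measure X) (S h : X → ℝ≥0∞),
        Measurable S → Measurable h →
        (∫⁻ x, S x ^ q ∂μ) < ⊤ →
        (∀ γ : ℝ, 0 < γ → γ < 1 → ∀ lam : ℝ, 0 < lam →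
          μ ({x | ENNReal.ofReal (2 * lam) < S x} ∩
              {x | h x ≤ ENNReal.ofReal (γ ^ 2 * lam ^ 2)}) ≤
            ENNReal.ofReal (C * γ ^ η) * μ {x | ENNReal.ofReal lam < S x}) →
        (∫⁻ x, S x ^ q ∂μ) ≤ ENNReal.ofReal C' * ∫⁻ x, h x ^ (q / 2) ∂μ := by
  classical
  set γ : ℝ := min (1/2) ((2 ^ (-(q+1)) / C) ^ (1/η)) with hγdef
  have hb : (0:ℝ) < 2 ^ (-(q+1)) := Real.rpow_pos_of_pos two_pos _
  have hγ0 : 0 < γ := lt_min (by norm_num) (Real.rpow_pos_of_pos (div_pos hb hC) _)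
  have hγ1 : γ < 1 := lt_of_le_of_lt (min_le_left _ _) (by norm_num)
  have hγη : C * γ ^ η ≤ 2 ^ (-(q+1)) := by
    have h1 : γ ^ η ≤ ((2 ^ (-(q+1)) / C) ^ (1/η)) ^ η :=
      Real.rpow_le_rpow hγ0.le (min_le_right _ _) hη.le
    rw [← Real.rpow_mul (div_pos hb hC).le, one_div, inv_mul_cancel₀ hη.ne',
      Real.rpow_one] at h1
    calc C * γ ^ η ≤ C * (2 ^ (-(q+1)) / C) := by
          exact mul_le_mul_of_nonneg_left h1 hC.le
      _ = 2 ^ (-(q+1)) := by field_simp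
  set C' : ℝ := 2 ^ (q+1) * γ ^ (-q) with hC'def
  have hC'pos : 0 < C' := by positivity
  refine ⟨C', hC'pos, ?_⟩
  intro X _ μ S h hS hh hI hgood
  by_cases hH : (∫⁻ x, h x ^ (q/2) ∂μ) = ⊤
  · rw [hH, ENNReal.mul_top (ENNReal.ofReal_pos.mpr hC'pos).ne']
    exact le_top
  -- a.e. finiteness
  have hSae : ∀ᵐ x ∂μ, S x ≠ ∞ := by
    filter_upwards [ae_lt_top (hS.pow_const q) hI.ne] with x hx
    intro hxtop
    rw [hxtop, ENNReal.top_rpow_of_pos hq] at hx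
    exact lt_irrefl _ hx
  have hhae : ∀ᵐ x ∂μ, h x ≠ ∞ := by
    filter_upwards [ae_lt_top (hh.pow_const (q/2)) hH] with x hx
    intro hxtop
    rw [hxtop, ENNReal.top_rpow_of_pos (by positivity)] at hx
    exact lt_irrefl _ hx
  set f : X → ℝ := fun x => (S x).toReal with hfdef
  set k : X → ℝ := fun x => Real.sqrt ((h x).toReal) / γ with hkdef
  have hfm : Measurable f := hS.ennreal_toReal
  have hkm : Measurable k := (hh.ennreal_toReal.sqrt).div_const γ
  have hf_nn : 0 ≤ᵐ[μ] f := Filter.Eventually.of_forall fun x => ENNReal.toReal_nonneg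
  have hk_nn : 0 ≤ᵐ[μ] k := Filter.Eventually.of_forall fun x =>
    div_nonneg (Real.sqrt_nonneg _) hγ0.le
  have hg_nn : 0 ≤ᵐ[μ] fun x => f x / 2 := Filter.Eventually.of_forall fun x =>
    div_nonneg ENNReal.toReal_nonneg two_pos.le
  -- ∫ ofReal (f^q) = ∫ S^q
  have hIf : (∫⁻ x, ENNReal.ofReal (f x ^ q) ∂μ) = ∫⁻ x, S x ^ q ∂μ := by
    refine lintegral_congr_ae ?_
    filter_upwards [hSae] with x hx
    rw [hfdef]
    simp only
    rw [ENNReal.toReal_rpow, ENNReal.ofReal_toReal (ENNReal.rpow_ne_top_of_nonneg hq.le hx)]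
  -- ∫ ofReal (k^q) = γ^{-q} ∫ h^{q/2}
  have hIk : (∫⁻ x, ENNReal.ofReal (k x ^ q) ∂μ)
      = ENNReal.ofReal (γ ^ (-q)) * ∫⁻ x, h x ^ (q/2) ∂μ := by
    rw [← lintegral_const_mul' _ _ ENNReal.ofReal_ne_top]
    refine lintegral_congr_ae ?_
    filter_upwards [hhae] with x hx
    have h0 : 0 ≤ (h x).toReal := ENNReal.toReal_nonneg
    have hk1 : k x ^ q = γ ^ (-q) * (h x).toReal ^ (q/2) := by
      rw [hkdef]
      simp only
      rw [Real.div_rpow (Real.sqrt_nonneg _) hγ0.le, Real.sqrt_eq_rpow,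
        ← Real.rpow_mul h0, Real.rpow_neg hγ0.le]
      rw [one_div]
      ring_nf
    rw [hk1, ENNReal.ofReal_mul (by positivity), ENNReal.toReal_rpow,
      ENNReal.ofReal_toReal (ENNReal.rpow_ne_top_of_nonneg (by positivity) hx)]
  -- ∫ ofReal ((f/2)^q) = 2^{-q} ∫ S^q
  have hIg : (∫⁻ x, ENNReal.ofReal ((f x / 2) ^ q) ∂μ)
      = ENNReal.ofReal (2 ^ (-q)) * ∫⁻ x, S x ^ q ∂μ := by
    rw [← hIf, ← lintegral_const_mul' _ _ ENNReal.ofReal_ne_top]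
    refine lintegral_congr fun x => ?_
    rw [Real.div_rpow ENNReal.toReal_nonneg two_pos.le, Real.rpow_neg two_pos.le,
      ← ENNReal.ofReal_mul (by positivity)]
    congr 1
    field_simp
    rfl
  -- layer cakes
  have LC1 := lintegral_rpow_eq_lintegral_meas_lt_mul μ hf_nn hfm.aemeasurable hq
  have LC2 := lintegral_rpow_eq_lintegral_meas_lt_mul μ hg_nn
    (hfm.div_const 2).aemeasurable hq
  have LC3 := lintegral_rpow_eq_lintegral_meas_lt_mul μ hk_nn hkm.aemeasurable hq
  rw [hIf] at LC1
  rw [hIg] at LC2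
  rw [hIk] at LC3
  -- pointwise distribution inequality
  have key : ∀ t : ℝ, 0 < t →
      μ {a | t < f a / 2} ≤ ENNReal.ofReal (C * γ ^ η) * μ {a | t < f a}
        + μ {a | t < k a} := by
    intro t ht
    have e1 : μ {a | t < f a / 2} = μ {x | ENNReal.ofReal (2*t) < S x} := by
      refine measure_congr ?_
      rw [Filter.eventuallyEq_set]
      filter_upwards [hSae] with x hx
      simp only [Set.mem_setOf_eq, hfdef]
      rw [ENNReal.ofReal_lt_iff_lt_toReal (by positivity) hx, lt_div_iff₀ two_pos]
      constructor <;> intro hlt <;> linarith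
    have e3 : μ {x | ENNReal.ofReal t < S x} = μ {a | t < f a} := by
      refine measure_congr ?_
      rw [Filter.eventuallyEq_set]
      filter_upwards [hSae] with x hx
      simp only [Set.mem_setOf_eq, hfdef]
      rw [ENNReal.ofReal_lt_iff_lt_toReal ht.le hx]
    have e4 : μ {x | ENNReal.ofReal (γ^2 * t^2) < h x} = μ {a | t < k a} := by
      refine measure_congr ?_
      rw [Filter.eventuallyEq_set]
      filter_upwards [hhae] with x hx
      simp only [Set.mem_setOf_eq, hkdef]
      rw [ENNReal.ofReal_lt_iff_lt_toReal (by positivity) hx, lt_div_iff₀ hγ0,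
        Real.lt_sqrt (by positivity)]
      constructor <;> intro hlt <;> nlinarith
    rw [e1, ← e3, ← e4]
    calc μ {x | ENNReal.ofReal (2*t) < S x}
        ≤ μ ({x | ENNReal.ofReal (2*t) < S x} ∩ {x | h x ≤ ENNReal.ofReal (γ^2 * t^2)})
          + μ ({x | ENNReal.ofReal (2*t) < S x} \ {x | h x ≤ ENNReal.ofReal (γ^2 * t^2)}) :=
          measure_le_inter_add_diff μ _ _
      _ ≤ ENNReal.ofReal (C * γ ^ η) * μ {x | ENNReal.ofReal t < S x}
          + μ {x | ENNReal.ofReal (γ^2 * t^2) < h x} := by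
          gcongr
          · exact hgood γ hγ0 hγ1 t ht
          · intro x hx
            simp only [Set.mem_diff, Set.mem_setOf_eq] at hx ⊢
            exact lt_of_not_ge hx.2
  -- measurability of distribution functions
  have hFm : Measurable fun t : ℝ => μ {a | t < f a} := by
    refine Antitone.measurable fun s t hst => ?_
    exact measure_mono fun x hx => lt_of_le_of_lt hst hx
  have hwm : Measurable fun t : ℝ => ENNReal.ofReal (t ^ (q-1)) :=
    (measurable_id.pow_const (q-1)).ennreal_ofReal
  -- integrate the pointwise bound
  have main : (∫⁻ t in Set.Ioi (0:ℝ), μ {a | t < f a / 2} * ENNReal.ofReal (t ^ (q-1)))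
      ≤ ENNReal.ofReal (C * γ ^ η)
          * (∫⁻ t in Set.Ioi (0:ℝ), μ {a | t < f a} * ENNReal.ofReal (t ^ (q-1)))
        + ∫⁻ t in Set.Ioi (0:ℝ), μ {a | t < k a} * ENNReal.ofReal (t ^ (q-1)) := by
    rw [← lintegral_const_mul' _ _ ENNReal.ofReal_ne_top]
    rw [← lintegral_add_left (f := fun t => ENNReal.ofReal (C * γ ^ η) * (μ {a | t < f a} * ENNReal.ofReal (t ^ (q-1)))) ((hFm.mul hwm).const_mul _)]
    refine lintegral_mono_ae ?_
    filter_upwards [self_mem_ae_restrict measurableSet_Ioi] with t ht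
    calc μ {a | t < f a / 2} * ENNReal.ofReal (t ^ (q-1))
        ≤ (ENNReal.ofReal (C * γ ^ η) * μ {a | t < f a} + μ {a | t < k a})
            * ENNReal.ofReal (t ^ (q-1)) := mul_le_mul_left (key t ht) _
      _ = _ := by ring
  -- combine the layer cakes
  have main2 : ENNReal.ofReal (2 ^ (-q)) * (∫⁻ x, S x ^ q ∂μ)
      ≤ ENNReal.ofReal (C * γ ^ η) * (∫⁻ x, S x ^ q ∂μ)
        + ENNReal.ofReal (γ ^ (-q)) * ∫⁻ x, h x ^ (q/2) ∂μ := by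
    rw [LC2, LC3, LC1]
    calc ENNReal.ofReal q * ∫⁻ t in Set.Ioi (0:ℝ), μ {a | t < f a / 2} * ENNReal.ofReal (t ^ (q-1))
        ≤ ENNReal.ofReal q * (ENNReal.ofReal (C * γ ^ η)
            * (∫⁻ t in Set.Ioi (0:ℝ), μ {a | t < f a} * ENNReal.ofReal (t ^ (q-1)))
          + ∫⁻ t in Set.Ioi (0:ℝ), μ {a | t < k a} * ENNReal.ofReal (t ^ (q-1))) :=
          mul_le_mul_right main _
      _ = _ := by ring
  -- absorb
  set I := ∫⁻ x, S x ^ q ∂μ with hIdef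
  set H := ∫⁻ x, h x ^ (q/2) ∂μ with hHdef
  set a : ℝ≥0∞ := ENNReal.ofReal (2 ^ (-(q+1))) with hadef
  have ha0 : a ≠ 0 := by
    rw [hadef]
    simpa using hb
  have hatop : a ≠ ⊤ := ENNReal.ofReal_ne_top
  have h2a : ENNReal.ofReal (2 ^ (-q)) = a + a := by
    have e : (2:ℝ) ^ (-(q+1)) = 2 ^ (-q) / 2 := by
      rw [show -(q+1) = -q - 1 by ring, Real.rpow_sub two_pos, Real.rpow_one]
    rw [hadef, ← ENNReal.ofReal_add hb.le hb.le, e]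
    ring_nf
  have habs : a * I + a * I ≤ a * I + ENNReal.ofReal (γ ^ (-q)) * H := by
    calc a * I + a * I = (a + a) * I := by ring
      _ = ENNReal.ofReal (2 ^ (-q)) * I := by rw [h2a]
      _ ≤ ENNReal.ofReal (C * γ ^ η) * I + ENNReal.ofReal (γ ^ (-q)) * H := main2
      _ ≤ a * I + ENNReal.ofReal (γ ^ (-q)) * H := by
          gcongr
          exact ENNReal.ofReal_le_ofReal hγη
  have haI : a * I ≠ ⊤ := ENNReal.mul_ne_top hatop hI.ne
  have habs2 : a * I ≤ ENNReal.ofReal (γ ^ (-q)) * H :=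
    (ENNReal.add_le_add_iff_left haI).mp habs
  have hainv : a⁻¹ = ENNReal.ofReal (2 ^ (q+1)) := by
    rw [hadef, show -(q+1) = -(q+1) from rfl, Real.rpow_neg two_pos.le,
      ENNReal.ofReal_inv_of_pos (Real.rpow_pos_of_pos two_pos _), inv_inv]
  calc I = a⁻¹ * (a * I) := by
        rw [← mul_assoc, ENNReal.inv_mul_cancel ha0 hatop, one_mul]
    _ ≤ a⁻¹ * (ENNReal.ofReal (γ ^ (-q)) * H) := mul_le_mul_right habs2 _
    _ = ENNReal.ofReal C' * H := by
        rw [hainv, ← mul_assoc, ← ENNReal.ofReal_mul (by positivity), hC'def]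
end
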